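/- arXiv:1303.5624 — 4 statements merged into one kernel-verified Lean document; each statement's English description precedes it below -/
import Mathlib

section
/- For natural numbers a, b with a ≤ b + 1, and any natural d ≤ a, and any real t ≥ 0, one has [a-d](t)·[b+d](t) ≤ [a](t)·[b](t), where [n](t) = 1 + t + ... + t^{n-1}. -/
open Finset

lemma step_aux (k n : ℕ) (hk : k ≤ n) (t : ℝ) (ht : 0 ≤ t) :
    (∑ i ∈ range k, t ^ i) * (∑ i ∈ range (n + 1), t ^ i) ≤
      (∑ i ∈ range (k + 1), t ^ i) * (∑ i ∈ range n, t ^ i) := by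
  have hsplit : (∑ i ∈ range n, t ^ i) =
      (∑ i ∈ range (n - k), t ^ i) + t ^ (n - k) * ∑ i ∈ range k, t ^ i := by
    conv_lhs => rw [← Nat.sub_add_cancel hk, Finset.sum_range_add]
    rw [Finset.mul_sum]
    congr 1
    exact Finset.sum_congr rfl fun i _ => by rw [pow_add]
  rw [Finset.sum_range_succ, Finset.sum_range_succ]
  have hA : 0 ≤ ∑ i ∈ range k, t ^ i :=
    Finset.sum_nonneg fun i _ => pow_nonneg ht i
  have hC : 0 ≤ ∑ i ∈ range (n - k), t ^ i :=
    Finset.sum_nonneg fun i _ => pow_nonneg ht i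
  have hpow : t ^ k * t ^ (n - k) = t ^ n := by
    rw [← pow_add, Nat.add_sub_cancel' hk]
  have hB : t ^ k * (∑ i ∈ range n, t ^ i) =
      t ^ k * (∑ i ∈ range (n - k), t ^ i) + t ^ n * (∑ i ∈ range k, t ^ i) := by
    rw [hsplit, mul_add, ← mul_assoc, hpow]
  nlinarith [mul_nonneg (pow_nonneg ht k) hC, hB]

/-- For natural numbers `a ≤ b + 1` (with `a ≥ 1`), any natural `d ≤ a` and real `t ≥ 0`,
`[a-d](t) * [b+d](t) ≤ [a](t) * [b](t)`, where `[n](t) = 1 + t + ... + t^(n-1)`. -/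
theorem stmt0 (a b d : ℕ) (ha : a ≤ b + 1) (hd : d ≤ a) (t : ℝ) (ht : 0 ≤ t) :
    (∑ i ∈ range (a - d), t ^ i) * (∑ i ∈ range (b + d), t ^ i) ≤
      (∑ i ∈ range a, t ^ i) * (∑ i ∈ range b, t ^ i) := by
  induction d with
  | zero => simp
  | succ d ih =>
    have hd' : d ≤ a := Nat.le_of_succ_le hd
    refine le_trans ?_ (ih hd')
    have h1 : a - (d + 1) + 1 = a - d := by omega
    have h2 : b + (d + 1) = (b + d) + 1 := by omega
    have hk : a - (d + 1) ≤ b + d := by omega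
    rw [h2, ← h1]
    exact step_aux _ _ hk t ht
end

section
/- For every integer m ≥ 3 and every real s ≥ 1, one has [2](s)·[2](s)·[2](s)·[m](s) ≤ [3](s)·[2](s)·[2](s)·[m−1](s), i.e. [2,2,2,m](s) ≤ [2,2,3,m−1](s). -/
open Finset

lemma key12 (s : ℝ) (hs : 1 ≤ s) : ∀ m, 3 ≤ m →
    (∑ i ∈ range 2, s ^ i) * (∑ i ∈ range m, s ^ i) ≤
      (∑ i ∈ range 3, s ^ i) * (∑ i ∈ range (m - 1), s ^ i) := by
  intro m hm
  induction m, hm using Nat.le_induction with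
  | base => simp [Finset.sum_range_succ]; nlinarith [sq_nonneg s]
  | succ n hn ih =>
    have h0 : (0:ℝ) ≤ s := le_trans zero_le_one hs
    have hsum : ∑ i ∈ range (n + 1), s ^ i = (∑ i ∈ range n, s ^ i) + s ^ n :=
      Finset.sum_range_succ _ _
    have hn1 : n - 1 + 1 = n := by omega
    have hsum2 : ∑ i ∈ range n, s ^ i = (∑ i ∈ range (n - 1), s ^ i) + s ^ (n - 1) := by
      conv_lhs => rw [← hn1, Finset.sum_range_succ]
    have hpow : s ^ n = s ^ (n - 1) * s := by
      rw [← pow_succ, hn1]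
    have hstep : (∑ i ∈ range 2, s ^ i) * s ^ n ≤ (∑ i ∈ range 3, s ^ i) * s ^ (n - 1) := by
      rw [hpow]
      simp only [Finset.sum_range_succ, Finset.sum_range_zero]
      have hp : (0:ℝ) ≤ s ^ (n - 1) := pow_nonneg h0 _
      nlinarith [sq_nonneg s]
    calc (∑ i ∈ range 2, s ^ i) * (∑ i ∈ range (n + 1), s ^ i)
        = (∑ i ∈ range 2, s ^ i) * (∑ i ∈ range n, s ^ i)
          + (∑ i ∈ range 2, s ^ i) * s ^ n := by rw [hsum]; ring
      _ ≤ (∑ i ∈ range 3, s ^ i) * (∑ i ∈ range (n - 1), s ^ i)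
          + (∑ i ∈ range 3, s ^ i) * s ^ (n - 1) := add_le_add ih hstep
      _ = (∑ i ∈ range 3, s ^ i) * (∑ i ∈ range (n + 1 - 1), s ^ i) := by
          simp only [Nat.add_sub_cancel]
          rw [hsum2]; ring

/-- For every integer `m ≥ 3` and real `s ≥ 1`, `[2,2,2,m](s) ≤ [2,2,3,m−1](s)`,
where `[n](s) = 1 + s + ... + s^(n−1)` and `[n₁,…,n_r]` denotes the product. -/
theorem stmt12 (m : ℕ) (hm : 3 ≤ m) (s : ℝ) (hs : 1 ≤ s) :
    (∑ i ∈ range 2, s ^ i) * (∑ i ∈ range 2, s ^ i) * (∑ i ∈ range 2, s ^ i) *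
        (∑ i ∈ range m, s ^ i) ≤
      (∑ i ∈ range 3, s ^ i) * (∑ i ∈ range 2, s ^ i) * (∑ i ∈ range 2, s ^ i) *
        (∑ i ∈ range (m - 1), s ^ i) := by
  have h0 : (0:ℝ) ≤ s := le_trans zero_le_one hs
  have h2 : (0:ℝ) ≤ ∑ i ∈ range 2, s ^ i :=
    Finset.sum_nonneg fun i _ => pow_nonneg h0 i
  have := key12 s hs m hm
  calc (∑ i ∈ range 2, s ^ i) * (∑ i ∈ range 2, s ^ i) * (∑ i ∈ range 2, s ^ i) *
        (∑ i ∈ range m, s ^ i)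
      = (∑ i ∈ range 2, s ^ i) * (∑ i ∈ range 2, s ^ i) *
          ((∑ i ∈ range 2, s ^ i) * (∑ i ∈ range m, s ^ i)) := by ring
    _ ≤ (∑ i ∈ range 2, s ^ i) * (∑ i ∈ range 2, s ^ i) *
          ((∑ i ∈ range 3, s ^ i) * (∑ i ∈ range (m - 1), s ^ i)) :=
        mul_le_mul_of_nonneg_left this (mul_nonneg h2 h2)
    _ = (∑ i ∈ range 3, s ^ i) * (∑ i ∈ range 2, s ^ i) * (∑ i ∈ range 2, s ^ i) *
        (∑ i ∈ range (m - 1), s ^ i) := by ring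
end

section
/- Let f₀, f₁, f₂, f₂^Δ be natural numbers with f₂^Δ ≤ f₂, satisfying f₁ ≤ f₀ + f₂ − 2 and 2f₁ ≥ 4f₂ − f₂^Δ. Then for every real t with 0 < t ≤ 1, one has f₂/(t⁻¹+1)² − f₂^Δ/(t⁻¹+1)³ ≤ 2(f₀−2)·t⁻¹/(t⁻¹+1)³, provided f₀ ≥ 2. -/
/-- Let `f₀, f₁, f₂, f₂Δ` be natural numbers with `f₂Δ ≤ f₂`, `f₀ ≥ 2`, satisfying the Euler
inequality `f₁ ≤ f₀ + f₂ − 2` and the side-counting inequality `2f₁ ≥ 4f₂ − f₂Δ`. Then for every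
real `0 < t ≤ 1`, `f₂/(t⁻¹+1)² − f₂Δ/(t⁻¹+1)³ ≤ 2(f₀−2)·t⁻¹/(t⁻¹+1)³`. -/
theorem stmt14 (f₀ f₁ f₂ f₂Δ : ℕ) (hΔ : f₂Δ ≤ f₂) (hf₀ : 2 ≤ f₀)
    (euler : (f₁ : ℝ) ≤ (f₀ : ℝ) + (f₂ : ℝ) - 2)
    (sides : 4 * (f₂ : ℝ) - (f₂Δ : ℝ) ≤ 2 * (f₁ : ℝ))
    (t : ℝ) (ht0 : 0 < t) (ht1 : t ≤ 1) :
    (f₂ : ℝ) / (t⁻¹ + 1) ^ 2 - (f₂Δ : ℝ) / (t⁻¹ + 1) ^ 3 ≤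
      2 * ((f₀ : ℝ) - 2) * t⁻¹ / (t⁻¹ + 1) ^ 3 := by
  have hs : (1 : ℝ) ≤ t⁻¹ := (one_le_inv_iff₀.mpr ⟨ht0, ht1⟩)
  set s := t⁻¹ with hsdef
  have hs0 : (0 : ℝ) < s + 1 := by linarith
  have hΔ' : (f₂Δ : ℝ) ≤ f₂ := Nat.cast_le.mpr hΔ
  have key : (f₂ : ℝ) * (s + 1) - f₂Δ ≤ 2 * ((f₀ : ℝ) - 2) * s := by
    nlinarith [mul_le_mul_of_nonneg_right (sub_nonneg.mpr hΔ') (by linarith : (0:ℝ) ≤ s - 1)]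
  calc (f₂ : ℝ) / (s + 1) ^ 2 - (f₂Δ : ℝ) / (s + 1) ^ 3
      = ((f₂ : ℝ) * (s + 1) - f₂Δ) / (s + 1) ^ 3 := by field_simp
    _ ≤ 2 * ((f₀ : ℝ) - 2) * s / (s + 1) ^ 3 := by gcongr
end

section
/- Let Γ be a connected k-regular graph (k ≥ 2, multi-edges allowed) with a distinguished vertex o, and let T_k be the k-regular tree with root õ. Then for every n, the number C_n of closed walks of length n in Γ based at o equals ∑_{d=0}^{n} a*_d · c(n,d), where a*_d is the number of closed walks of length d at o with no backtracks, and c(n,d) is the number of walks of length n in T_k between two fixed vertices at distance d. -/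
/-- A multigraph, given by its vertices, darts (oriented edges), a fixed-point-free involution
reversing darts, and the source vertex of each dart. -/
structure Multigraph where
  V : Type
  D : Type
  bar : D → D
  bar_involutive : Function.Involutive bar
  bar_ne : ∀ d : D, bar d ≠ d
  src : D → V

namespace Multigraph

/-- The target of a dart. -/
def tgt (G : Multigraph) (d : G.D) : G.V := G.src (G.bar d)

/-- `G.IsWalkFrom u v w` says the list of darts `w` is a walk from `u` to `v`. -/
def IsWalkFrom (G : Multigraph) : G.V → G.V → List G.D → Prop
  | u, v, [] => u = v
  | u, v, d :: rest => G.src d = u ∧ G.IsWalkFrom (G.tgt d) v rest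

/-- A walk has no backtracks if no two consecutive darts are the same edge traversed in
opposite directions (not counted cyclically). -/
def NoBacktrack (G : Multigraph) : List G.D → Prop
  | d :: e :: rest => G.bar d ≠ e ∧ G.NoBacktrack (e :: rest)
  | _ => True

/-- `G` is `k`-regular: every vertex is the source of exactly `k` darts. -/
def IsRegular (G : Multigraph) (k : ℕ) : Prop :=
  ∀ v : G.V, Nat.card {d : G.D // G.src d = v} = k

/-- `G` is connected: any two vertices are joined by a walk. -/
def Connected (G : Multigraph) : Prop :=
  ∀ u v : G.V, ∃ w : List G.D, G.IsWalkFrom u v w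

/-- `Cₙ`: the number of closed walks of length `n` based at `o`. -/
noncomputable def closedWalkCount (G : Multigraph) (o : G.V) (n : ℕ) : ℕ :=
  Nat.card {w : List G.D // w.length = n ∧ G.IsWalkFrom o o w}

/-- `a*ₙ`: the number of closed walks of length `n` based at `o` without backtracks. -/
noncomputable def nbClosedWalkCount (G : Multigraph) (o : G.V) (n : ℕ) : ℕ :=
  Nat.card {w : List G.D // w.length = n ∧ G.IsWalkFrom o o w ∧ G.NoBacktrack w}

end Multigraph

/-- `treeWalkCount k n d` is the number of walks of length `n` in the `k`-regular tree `T_k`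
between two fixed vertices at distance `d` (characterized by conditioning on the last step of
the walk). -/
def treeWalkCount (k : ℕ) : ℕ → ℕ → ℕ
  | 0, 0 => 1
  | 0, _ + 1 => 0
  | n + 1, 0 => k * treeWalkCount k n 1
  | n + 1, d + 1 => treeWalkCount k n d + (k - 1) * treeWalkCount k n (d + 2)


namespace Multigraph

variable (G : Multigraph)

/-- Walk predicate without specifying the endpoint. -/
def IsWalk : G.V → List G.D → Prop
  | _, [] => True
  | u, d :: r => G.src d = u ∧ IsWalk (G.tgt d) r

/-- Endpoint of a walk starting at `u`. -/
def endOf : G.V → List G.D → G.V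
  | u, [] => u
  | _, d :: r => endOf (G.tgt d) r

variable {G}

lemma isWalk_nil (u : G.V) : G.IsWalk u [] := trivial

lemma isWalkFrom_iff : ∀ {u v : G.V} {w : List G.D},
    G.IsWalkFrom u v w ↔ G.IsWalk u w ∧ G.endOf u w = v
  | u, v, [] => by simp [IsWalkFrom, IsWalk, endOf]
  | u, v, d :: r => by
      simp [IsWalkFrom, IsWalk, endOf, @isWalkFrom_iff (G.tgt d) v r, and_assoc]

lemma isWalk_append : ∀ {u : G.V} {a b : List G.D},
    G.IsWalk u (a ++ b) ↔ G.IsWalk u a ∧ G.IsWalk (G.endOf u a) b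
  | u, [], b => by simp [IsWalk, endOf]
  | u, d :: r, b => by
      simp [IsWalk, endOf, @isWalk_append (G.tgt d) r b, and_assoc]

lemma endOf_append : ∀ {u : G.V} {a b : List G.D},
    G.endOf u (a ++ b) = G.endOf (G.endOf u a) b
  | u, [], b => rfl
  | u, d :: r, b => @endOf_append (G.tgt d) r b

lemma endOf_singleton (u : G.V) (d : G.D) : G.endOf u [d] = G.tgt d := rfl

lemma isWalk_singleton {u : G.V} {d : G.D} : G.IsWalk u [d] ↔ G.src d = u := by
  simp [IsWalk]

lemma noBacktrack_iff_chain' : ∀ {w : List G.D},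
    G.NoBacktrack w ↔ List.Chain' (fun d e => G.bar d ≠ e) w
  | [] => by simp [NoBacktrack, List.Chain']
  | [d] => by simp [NoBacktrack, List.Chain']
  | d :: e :: r => by
      simp [NoBacktrack, @noBacktrack_iff_chain' (e :: r), List.Chain', List.isChain_cons_cons]

variable (G)

open Classical in
/-- One step of word reduction on a reversed accumulator. -/
noncomputable def rstep (acc : List G.D) (d : G.D) : List G.D :=
  match acc with
  | [] => [d]
  | e :: t => if e = G.bar d then t else d :: e :: t

/-- The reversed reduction of a word. -/
noncomputable def racc (w : List G.D) : List G.D := w.foldl G.rstep []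

/-- The reduction (backtrack-free core) of a word. -/
noncomputable def red (w : List G.D) : List G.D := (G.racc w).reverse

variable {G}

lemma racc_append_singleton (w : List G.D) (d : G.D) :
    G.racc (w ++ [d]) = G.rstep (G.racc w) d := by
  simp [racc]

lemma red_eq_iff {w p : List G.D} : G.red w = p ↔ G.racc w = p.reverse := by
  constructor
  · rintro rfl; simp [red]
  · intro h; simp [red, h]

lemma rstep_eq_iff (acc : List G.D) (d : G.D) (L : List G.D) :
    G.rstep acc d = L ↔
      acc = G.bar d :: L ∨ (L = d :: acc ∧ ∀ a ∈ acc.head?, a ≠ G.bar d) := by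
  match acc with
  | [] => simp [rstep]; aesop
  | e :: t =>
      simp only [rstep]
      split_ifs with h
      · subst h
        constructor
        · rintro rfl; left; rfl
        · rintro (h | ⟨rfl, h2⟩)
          · exact (List.cons.injEq .. ▸ h).2.symm ▸ (List.cons.injEq .. ▸ h).2.symm ▸ rfl
          · exact absurd rfl (h2 _ rfl)
      · constructor
        · rintro rfl
          right
          exact ⟨rfl, by simpa using fun hh => h hh⟩
        · rintro (hh | ⟨rfl, h2⟩)
          · exact absurd (List.cons.injEq .. ▸ hh).1 h
          · rfl

/-- The good-accumulator invariant. -/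
def GoodAcc (u : G.V) (acc : List G.D) : Prop :=
  G.IsWalk u acc.reverse ∧ List.Chain' (fun d e => G.bar d ≠ e) acc.reverse

lemma rstep_good {u v : G.V} {acc : List G.D} {d : G.D}
    (h : G.GoodAcc u acc) (he : G.endOf u acc.reverse = v) (hd : G.src d = v) :
    G.GoodAcc u (G.rstep acc d) ∧ G.endOf u (G.rstep acc d).reverse = G.tgt d ∧
      (G.rstep acc d).length ≤ acc.length + 1 := by
  obtain ⟨hw, hc⟩ := h
  match acc with
  | [] =>
      simp only [List.reverse_nil, endOf] at he
      subst he
      refine ⟨⟨by simp [isWalk_singleton, rstep, hd], by simp [rstep, List.Chain']⟩, ?_, by simp [rstep]⟩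
      simp [rstep, endOf_singleton]
  | e :: t =>
      have hrev : (e :: t).reverse = t.reverse ++ [e] := by simp
      rw [hrev] at hw hc he
      rw [isWalk_append] at hw
      rw [endOf_append] at he
      simp only [rstep]
      split_ifs with hbar
      · -- cancellation
        subst hbar
        refine ⟨⟨hw.1, (List.isChain_append.mp hc).1⟩, ?_, by simp [List.length_cons]; omega⟩
        have : G.src (G.bar d) = G.endOf u t.reverse := by
          have := hw.2
          rw [isWalk_singleton] at this
          exact this
        rw [← this]; rfl
      · -- extension
        have hrev2 : (d :: e :: t).reverse = (t.reverse ++ [e]) ++ [d] := by simp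
        have hsrc : G.src d = G.endOf u (t.reverse ++ [e]) := by
          rw [endOf_append, hd]
          exact he.symm
        refine ⟨⟨?_, ?_⟩, ?_, ?_⟩
        · rw [hrev2, isWalk_append]
          exact ⟨by rw [isWalk_append]; exact hw, by rw [isWalk_singleton]; exact hsrc⟩
        · rw [hrev2, List.Chain', List.isChain_append]
          refine ⟨hc, List.isChain_singleton _, ?_⟩
          intro x hx y hy
          simp only [List.head?_cons, Option.mem_def, Option.some.injEq] at hy
          subst hy
          rw [List.getLast?_concat] at hx
          simp only [Option.mem_def, Option.some.injEq] at hx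
          subst hx
          intro hcon
          exact hbar (by rw [← hcon, G.bar_involutive])
        · rw [hrev2, endOf_append, endOf_singleton]
        · simp [List.length_cons]

lemma foldl_good : ∀ (w : List G.D) {u v : G.V} {acc : List G.D},
    G.GoodAcc u acc → G.endOf u acc.reverse = v → G.IsWalk v w →
    G.GoodAcc u (w.foldl G.rstep acc) ∧
      G.endOf u (w.foldl G.rstep acc).reverse = G.endOf v w ∧
      (w.foldl G.rstep acc).length ≤ acc.length + w.length
  | [], u, v, acc, hg, he, _ => ⟨hg, by simpa [endOf] using he, by simp⟩
  | d :: r, u, v, acc, hg, he, hw => by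
      obtain ⟨hd, hw'⟩ := hw
      obtain ⟨hg', he', hl'⟩ := rstep_good hg he hd
      obtain ⟨a, b, c⟩ := foldl_good r hg' he' hw'
      refine ⟨a, by simpa [endOf] using b, ?_⟩
      calc ((d :: r).foldl G.rstep acc).length ≤ (G.rstep acc d).length + r.length := c
        _ ≤ acc.length + 1 + r.length := by omega
        _ = acc.length + (d :: r).length := by simp [List.length_cons]; omega

lemma goodAcc_nil (u : G.V) : G.GoodAcc u [] := ⟨trivial, by simp [List.Chain']⟩

lemma red_walk {u : G.V} {w : List G.D} (hw : G.IsWalk u w) :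
    G.IsWalk u (G.red w) ∧ List.Chain' (fun d e => G.bar d ≠ e) (G.red w) ∧
      G.endOf u (G.red w) = G.endOf u w ∧ (G.red w).length ≤ w.length := by
  obtain ⟨⟨h1, h2⟩, h3, h4⟩ := foldl_good w (goodAcc_nil u) rfl hw
  exact ⟨h1, h2, h3, by simpa [red, racc] using h4⟩

section Finiteness

variable {k : ℕ}

lemma finite_star (hk : 1 ≤ k) (hreg : G.IsRegular k) (v : G.V) :
    Finite {d : G.D // G.src d = v} := by
  have h := hreg v
  have : 0 < Nat.card {d : G.D // G.src d = v} := by omega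
  exact (Nat.card_pos_iff.mp this).2

lemma finite_walks_set (hk : 1 ≤ k) (hreg : G.IsRegular k) :
    ∀ (n : ℕ) (u : G.V), {w : List G.D | w.length = n ∧ G.IsWalk u w}.Finite
  | 0, u => by
      apply Set.Finite.subset (Set.finite_singleton ([] : List G.D))
      rintro w ⟨hl, -⟩
      simpa using List.length_eq_zero_iff.mp hl
  | n + 1, u => by
      have hstar : {d : G.D | G.src d = u}.Finite := by
        haveI : Finite {d : G.D // G.src d = u} := finite_star hk hreg u
        exact (Set.finite_coe_iff.mp ‹Finite {d : G.D // G.src d = u}›)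
      apply Set.Finite.subset (Set.Finite.biUnion hstar
        (fun d _ => ((finite_walks_set hk hreg n (G.tgt d)).image (d :: ·))))
      rintro w ⟨hl, hw⟩
      match w, hl with
      | d :: r, hl =>
        simp only [Set.mem_iUnion]
        exact ⟨d, hw.1, r, ⟨by simpa using hl, hw.2⟩, rfl⟩

lemma finite_walks (hk : 1 ≤ k) (hreg : G.IsRegular k) (n : ℕ) (u : G.V) :
    Finite {w : List G.D // w.length = n ∧ G.IsWalk u w} :=
  (finite_walks_set hk hreg n u).to_subtype

lemma finite_fiber (hk : 1 ≤ k) (hreg : G.IsRegular k) (n : ℕ) (u : G.V) (p : List G.D) :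
    Finite {w : List G.D // w.length = n ∧ G.IsWalk u w ∧ G.red w = p} := by
  haveI := finite_walks (G := G) hk hreg n u
  exact Finite.of_injective
    (fun x => (⟨x.1, x.2.1, x.2.2.1⟩ : {w : List G.D // w.length = n ∧ G.IsWalk u w}))
    (by rintro ⟨w, h⟩ ⟨w', h'⟩ hh; simpa using (by simpa using hh : w = w'))

lemma finite_nb (hk : 1 ≤ k) (hreg : G.IsRegular k) (d : ℕ) (o : G.V) :
    Finite {p : List G.D // p.length = d ∧ G.IsWalkFrom o o p ∧ G.NoBacktrack p} := by
  haveI := finite_walks (G := G) hk hreg d o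
  exact Finite.of_injective
    (fun x => (⟨x.1, x.2.1, (isWalkFrom_iff.mp x.2.2.1).1⟩ :
      {w : List G.D // w.length = d ∧ G.IsWalk o w}))
    (by rintro ⟨w, h⟩ ⟨w', h'⟩ hh; simpa using (by simpa using hh : w = w'))

end Finiteness

lemma nat_card_sigma {ι : Type} [Fintype ι] (F : ι → Type) [∀ i, Finite (F i)] :
    Nat.card (Σ i, F i) = ∑ i, Nat.card (F i) := by
  haveI := fun i => Fintype.ofFinite (F i)
  calc Nat.card (Σ i, F i) = Fintype.card (Σ i, F i) := Nat.card_eq_fintype_card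
    _ = ∑ i, Fintype.card (F i) := Fintype.card_sigma
    _ = ∑ i, Nat.card (F i) := by simp [Nat.card_eq_fintype_card]

lemma nat_card_sigma_const {ι : Type} [Finite ι] (F : ι → Type) [∀ i, Finite (F i)] {c : ℕ}
    (h : ∀ i, Nat.card (F i) = c) : Nat.card (Σ i, F i) = Nat.card ι * c := by
  haveI := Fintype.ofFinite ι
  rw [nat_card_sigma F, Nat.card_eq_fintype_card]
  simp [h, Finset.sum_const, Finset.card_univ, mul_comm]

lemma card_star_ne {k : ℕ} (hk : 1 ≤ k) (hreg : G.IsRegular k) {v : G.V} {a : G.D}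
    (ha : G.src a = v) :
    Nat.card {f : G.D // G.src f = v ∧ a ≠ f} = k - 1 := by
  classical
  haveI := finite_star (G := G) hk hreg v
  haveI : Fintype {d : G.D // G.src d = v} := Fintype.ofFinite _
  have e : {f : G.D // G.src f = v ∧ a ≠ f} ≃
      {x : {d : G.D // G.src d = v} // ¬ (x = ⟨a, ha⟩)} :=
    { toFun := fun x => ⟨⟨x.1, x.2.1⟩, fun h => x.2.2 (by
        have := congrArg Subtype.val h
        simpa using this.symm)⟩
      invFun := fun y => ⟨y.1.1, y.1.2, fun h => y.2 (Subtype.ext h.symm)⟩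
      left_inv := fun x => rfl
      right_inv := fun y => rfl }
  rw [Nat.card_congr e, Nat.card_eq_fintype_card]
  rw [Fintype.card_subtype_compl, Fintype.card_subtype_eq]
  have := hreg v
  rw [Nat.card_eq_fintype_card] at this
  rw [this]

lemma racc_eq_of_red {w p : List G.D} (h : G.red w = p) : G.racc w = p.reverse :=
  red_eq_iff.mp h

lemma fiber_card {k : ℕ} (hk : 1 ≤ k) (hreg : G.IsRegular k) :
    ∀ (n : ℕ) (u : G.V) (p : List G.D), G.IsWalk u p →
      List.Chain' (fun d e => G.bar d ≠ e) p →
      Nat.card {w : List G.D // w.length = n ∧ G.IsWalk u w ∧ G.red w = p} =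
        treeWalkCount k n p.length
  | 0, u, p, hp, hc => by
      cases p with
      | nil =>
          haveI : Unique {w : List G.D // w.length = 0 ∧ G.IsWalk u w ∧ G.red w = []} :=
            { default := ⟨[], rfl, trivial, rfl⟩
              uniq := by
                rintro ⟨w, hl, -, -⟩
                exact Subtype.ext (List.length_eq_zero_iff.mp hl) }
          have h1 : Nat.card {w : List G.D // w.length = 0 ∧ G.IsWalk u w ∧ G.red w = []} = 1 :=
            Nat.card_unique
          rw [h1]
          rfl
      | cons x t =>
          haveI : IsEmpty {w : List G.D // w.length = 0 ∧ G.IsWalk u w ∧ G.red w = x :: t} := by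
            constructor
            rintro ⟨w, hl, -, hr⟩
            rw [List.length_eq_zero_iff.mp hl] at hr
            simp [red, racc] at hr
          have h1 : Nat.card {w : List G.D // w.length = 0 ∧ G.IsWalk u w ∧ G.red w = x :: t} = 0 :=
            Nat.card_of_isEmpty
          rw [h1]
          rfl
  | n + 1, u, p, hp, hc => by
      rcases List.eq_nil_or_concat p with rfl | ⟨q, e, rfl⟩
      · -- p = []
        haveI : ∀ e : {e : G.D // G.src e = u},
            Finite {w : List G.D // w.length = n ∧ G.IsWalk u w ∧ G.red w = [e.1]} :=
          fun e => finite_fiber hk hreg n u [e.1]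
        haveI := finite_star (G := G) hk hreg u
        have key : Nat.card (Σ e : {e : G.D // G.src e = u},
            {w : List G.D // w.length = n ∧ G.IsWalk u w ∧ G.red w = [e.1]}) =
            Nat.card {w : List G.D // w.length = n + 1 ∧ G.IsWalk u w ∧ G.red w = []} := by
          apply Nat.card_eq_of_bijective
            (f := fun x => ⟨x.2.1 ++ [G.bar x.1.1], by
              obtain ⟨⟨e, he⟩, ⟨w, hl, hw, hr⟩⟩ := x
              have hend : G.endOf u w = G.tgt e := by
                have h1 := (red_walk hw).2.2.1
                rw [hr] at h1
                exact h1.symm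
              refine ⟨by simp [hl], ?_, ?_⟩
              · rw [isWalk_append, isWalk_singleton]
                exact ⟨hw, by rw [hend]; rfl⟩
              · rw [red_eq_iff, List.reverse_nil, racc_append_singleton,
                  racc_eq_of_red hr, rstep_eq_iff]
                left
                rw [G.bar_involutive]
                rfl⟩)
          constructor
          · rintro ⟨⟨e, he⟩, ⟨w, hw⟩⟩ ⟨⟨e', he'⟩, ⟨w', hw'⟩⟩ h
            simp only [Subtype.mk.injEq] at h
            obtain ⟨h1, h2⟩ := List.append_inj' h rfl
            have he2 : e = e' := G.bar_involutive.injective (by simpa using h2)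
            subst he2
            subst h1
            rfl
          · rintro ⟨w', hl', hw', hr'⟩
            have hne : w' ≠ [] := by rintro rfl; simp at hl'
            have hsplit := List.dropLast_append_getLast hne
            set w := w'.dropLast with hwdef
            set d := w'.getLast hne with hddef
            rw [← hsplit, isWalk_append, isWalk_singleton] at hw'
            obtain ⟨hw, hd⟩ := hw'
            have hstep : G.rstep (G.racc w) d = [] := by
              rw [← racc_append_singleton, hsplit]
              exact racc_eq_of_red hr'
            rw [rstep_eq_iff] at hstep
            rcases hstep with hacc | ⟨habs, -⟩
            · have hredw : G.red w = [G.bar d] := by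
                rw [red_eq_iff]
                simpa using hacc
              have hsrc : G.src (G.bar d) = u := by
                have := (red_walk hw).1
                rw [hredw, isWalk_singleton] at this
                exact this
              refine ⟨⟨⟨G.bar d, hsrc⟩, ⟨w, ?_, hw, hredw⟩⟩, ?_⟩
              · have : w'.length = w.length + 1 := by rw [← hsplit]; simp
                omega
              · apply Subtype.ext
                simp only
                rw [G.bar_involutive, hsplit]
            · exact absurd habs (by simp)
        rw [← key]
        rw [nat_card_sigma_const (c := treeWalkCount k n 1)
          (h := fun (e : {e : G.D // G.src e = u}) => fiber_card hk hreg n u [e.1]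
            (by rw [isWalk_singleton]; exact e.2) (List.isChain_singleton _))]
        rw [hreg u]
        simp [treeWalkCount]
      · -- p = q ++ [e]
        simp only [List.concat_eq_append] at hp hc ⊢
        have hq : G.IsWalk u q := (isWalk_append.mp hp).1
        have hqe : G.src e = G.endOf u q := by
          have := (isWalk_append.mp hp).2
          rwa [isWalk_singleton] at this
        have hcq : List.Chain' (fun d e => G.bar d ≠ e) q := (List.isChain_append.mp hc).1
        have hlast : ∀ a ∈ q.getLast?, G.bar a ≠ e :=
          fun a ha => (List.isChain_append.mp hc).2.2 a ha e rfl
        haveI : Finite {f : G.D // G.src f = G.tgt e ∧ G.bar e ≠ f} := by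
          haveI := finite_star (G := G) hk hreg (G.tgt e)
          exact Finite.of_injective
            (fun x => (⟨x.1, x.2.1⟩ : {d : G.D // G.src d = G.tgt e}))
            (by rintro ⟨a, _⟩ ⟨b, _⟩ h; simpa using (by simpa using h : a = b))
        haveI : ∀ f : {f : G.D // G.src f = G.tgt e ∧ G.bar e ≠ f},
            Finite {w : List G.D // w.length = n ∧ G.IsWalk u w ∧ G.red w = q ++ [e, f.1]} :=
          fun f => finite_fiber hk hreg n u _
        haveI : Finite {w : List G.D // w.length = n ∧ G.IsWalk u w ∧ G.red w = q} :=
          finite_fiber hk hreg n u q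
        have key : Nat.card ({w : List G.D // w.length = n ∧ G.IsWalk u w ∧ G.red w = q} ⊕
            Σ f : {f : G.D // G.src f = G.tgt e ∧ G.bar e ≠ f},
              {w : List G.D // w.length = n ∧ G.IsWalk u w ∧ G.red w = q ++ [e, f.1]}) =
            Nat.card {w : List G.D // w.length = n + 1 ∧ G.IsWalk u w ∧ G.red w = q ++ [e]} := by
          apply Nat.card_eq_of_bijective (f := fun x =>
            match x with
            | Sum.inl ww => ⟨ww.1 ++ [e], by
                obtain ⟨w, hl, hw, hr⟩ := ww
                have hend : G.endOf u w = G.endOf u q := by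
                  have h1 := (red_walk hw).2.2.1
                  rw [hr] at h1
                  exact h1.symm
                refine ⟨by simp [hl], ?_, ?_⟩
                · rw [isWalk_append, isWalk_singleton]
                  exact ⟨hw, by rw [hend]; exact hqe⟩
                · rw [red_eq_iff, racc_append_singleton, racc_eq_of_red hr, rstep_eq_iff]
                  right
                  refine ⟨by simp, ?_⟩
                  intro a ha
                  rw [List.head?_reverse] at ha
                  intro hcon
                  exact hlast a ha (by rw [hcon, G.bar_involutive])⟩
            | Sum.inr fw => ⟨fw.2.1 ++ [G.bar fw.1.1], by
                obtain ⟨⟨f, hf1, hf2⟩, ⟨w, hl, hw, hr⟩⟩ := fw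
                have hend : G.endOf u w = G.tgt f := by
                  have h1 := (red_walk hw).2.2.1
                  rw [hr] at h1
                  rw [← h1]
                  have : q ++ [e, f] = (q ++ [e]) ++ [f] := by simp
                  rw [this, endOf_append, endOf_singleton]
                refine ⟨by simp [hl], ?_, ?_⟩
                · rw [isWalk_append, isWalk_singleton]
                  exact ⟨hw, by rw [hend]; rfl⟩
                · rw [red_eq_iff, racc_append_singleton, racc_eq_of_red hr, rstep_eq_iff]
                  left
                  rw [G.bar_involutive]
                  simp⟩)
          constructor
          · rintro (⟨w, hwp⟩ | ⟨⟨f, hf1, hf2⟩, ⟨w, hwp⟩⟩) (⟨w', hwp'⟩ | ⟨⟨f', hf1', hf2'⟩, ⟨w', hwp'⟩⟩) h <;>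
              simp only [Subtype.mk.injEq] at h
            · obtain ⟨h1, -⟩ := List.append_inj' h rfl
              subst h1; rfl
            · obtain ⟨-, h2⟩ := List.append_inj' h rfl
              simp only [List.cons.injEq] at h2
              exact absurd (by rw [h2.1, G.bar_involutive]) hf2'
            · obtain ⟨-, h2⟩ := List.append_inj' h rfl
              simp only [List.cons.injEq] at h2
              exact absurd (by rw [← h2.1, G.bar_involutive]) hf2
            · obtain ⟨h1, h2⟩ := List.append_inj' h rfl
              simp only [List.cons.injEq] at h2
              have hf : f = f' := G.bar_involutive.injective h2.1
              subst hf; subst h1; rfl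
          · rintro ⟨w', hl', hw', hr'⟩
            have hne : w' ≠ [] := by rintro rfl; simp at hl'
            have hsplit := List.dropLast_append_getLast hne
            set w := w'.dropLast with hwdef
            set d := w'.getLast hne with hddef
            rw [← hsplit, isWalk_append, isWalk_singleton] at hw'
            obtain ⟨hw, hd⟩ := hw'
            have hwlen : w.length = n := by
              have : w'.length = w.length + 1 := by rw [← hsplit]; simp
              omega
            have hstep : G.rstep (G.racc w) d = e :: q.reverse := by
              rw [← racc_append_singleton, hsplit]
              have := racc_eq_of_red hr'
              simpa using this
            rw [rstep_eq_iff] at hstep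
            rcases hstep with hacc | ⟨heq, -⟩
            · -- cancellation case: last dart backtracks
              have hredw : G.red w = (q ++ [e]) ++ [G.bar d] := by
                rw [red_eq_iff]
                simpa using hacc
              have hwalkred := (red_walk hw).1
              have hchred := (red_walk hw).2.1
              rw [hredw] at hwalkred hchred
              have hsrc : G.src (G.bar d) = G.tgt e := by
                rw [isWalk_append, isWalk_singleton] at hwalkred
                have := hwalkred.2
                rw [endOf_append, endOf_singleton] at this
                exact this
              have hne2 : G.bar e ≠ G.bar d := by
                rw [List.Chain', List.isChain_append] at hchred
                exact hchred.2.2 e (by rw [List.getLast?_concat]; rfl) (G.bar d) rfl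
              refine ⟨Sum.inr ⟨⟨G.bar d, hsrc, hne2⟩, ⟨w, hwlen, hw, by
                rw [hredw]; simp⟩⟩, ?_⟩
              apply Subtype.ext
              simp only
              rw [G.bar_involutive, hsplit]
            · -- extension case: last dart is e
              simp only [List.cons.injEq] at heq
              have hde : d = e := heq.1.symm
              have hredw : G.red w = q := by
                rw [red_eq_iff]
                exact heq.2.symm
              refine ⟨Sum.inl ⟨w, hwlen, hw, hredw⟩, ?_⟩
              apply Subtype.ext
              simp only
              rw [← hde, hsplit]
        rw [← key, Nat.card_sum]
        rw [fiber_card hk hreg n u q hq hcq]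
        rw [nat_card_sigma_const (c := treeWalkCount k n (q.length + 2))
          (h := fun (f : {f : G.D // G.src f = G.tgt e ∧ G.bar e ≠ f}) => by
            have h1 : G.IsWalk u (q ++ [e, f.1]) := by
              have : q ++ [e, f.1] = (q ++ [e]) ++ [f.1] := by simp
              rw [this, isWalk_append, isWalk_singleton, endOf_append, endOf_singleton]
              exact ⟨hp, f.2.1⟩
            have h2 : List.Chain' (fun d e => G.bar d ≠ e) (q ++ [e, f.1]) := by
              have : q ++ [e, f.1] = (q ++ [e]) ++ [f.1] := by simp
              rw [this, List.Chain', List.isChain_append]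
              refine ⟨hc, List.isChain_singleton _, ?_⟩
              intro x hx y hy
              rw [List.getLast?_concat] at hx
              simp only [List.head?_cons, Option.mem_def, Option.some.injEq] at hx hy
              subst hx; subst hy
              exact f.2.2
            have := fiber_card hk hreg n u (q ++ [e, f.1]) h1 h2
            rwa [show (q ++ [e, f.1]).length = q.length + 2 by simp] at this)]
        rw [card_star_ne hk hreg (v := G.tgt e) (a := G.bar e) rfl]
        simp [treeWalkCount, List.length_append]

end Multigraph

open Multigraph in
theorem stmt15' (G : Multigraph) (o : G.V) (k : ℕ) (hk : 2 ≤ k)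
    (hreg : G.IsRegular k) (hconn : G.Connected) (n : ℕ) :
    G.closedWalkCount o n =
      ∑ d ∈ Finset.range (n + 1), G.nbClosedWalkCount o d * treeWalkCount k n d := by
  classical
  have hk1 : 1 ≤ k := by omega
  haveI hfibfin : ∀ (p : List G.D),
      Finite {w : List G.D // w.length = n ∧ G.IsWalk o w ∧ G.red w = p} :=
    fun p => finite_fiber hk1 hreg n o p
  haveI hnbfin : ∀ d : Fin (n + 1),
      Finite {p : List G.D // p.length = (d : ℕ) ∧ G.IsWalkFrom o o p ∧ G.NoBacktrack p} :=
    fun d => finite_nb hk1 hreg (d : ℕ) o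
  have key : Nat.card (Σ d : Fin (n + 1),
      Σ p : {p : List G.D // p.length = (d : ℕ) ∧ G.IsWalkFrom o o p ∧ G.NoBacktrack p},
        {w : List G.D // w.length = n ∧ G.IsWalk o w ∧ G.red w = p.1}) =
      Nat.card {w : List G.D // w.length = n ∧ G.IsWalkFrom o o w} := by
    apply Nat.card_eq_of_bijective (f := fun x => ⟨x.2.2.1, by
      obtain ⟨d, p, w⟩ := x
      obtain ⟨hl, hw, hr⟩ := w.2
      refine ⟨hl, isWalkFrom_iff.mpr ⟨hw, ?_⟩⟩
      have h1 := (red_walk hw).2.2.1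
      rw [hr] at h1
      rw [← h1]
      exact (isWalkFrom_iff.mp p.2.2.1).2⟩)
    constructor
    · rintro ⟨d1, p1, w1⟩ ⟨d2, p2, w2⟩ h
      have hww : w1.1 = w2.1 := congrArg Subtype.val h
      have hpp : p1.1 = p2.1 := by rw [← w1.2.2.2, ← w2.2.2.2, hww]
      have hdd : d1 = d2 := Fin.ext (by rw [← p1.2.1, ← p2.2.1, hpp])
      subst hdd
      have hp : p1 = p2 := Subtype.ext hpp
      subst hp
      have hw : w1 = w2 := Subtype.ext hww
      subst hw
      rfl
    · rintro ⟨w, hl, hwf⟩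
      obtain ⟨hw, hend⟩ := isWalkFrom_iff.mp hwf
      obtain ⟨hwalkp, hch, hendp, hlenp⟩ := red_walk hw
      refine ⟨⟨⟨(G.red w).length, by omega⟩,
        ⟨G.red w, rfl, isWalkFrom_iff.mpr ⟨hwalkp, by rw [hendp, hend]⟩,
          noBacktrack_iff_chain'.mpr hch⟩,
        ⟨w, hl, hw, rfl⟩⟩, rfl⟩
  have step2 : ∀ d : Fin (n + 1),
      Nat.card (Σ p : {p : List G.D // p.length = (d : ℕ) ∧ G.IsWalkFrom o o p ∧ G.NoBacktrack p},
        {w : List G.D // w.length = n ∧ G.IsWalk o w ∧ G.red w = p.1}) =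
      G.nbClosedWalkCount o (d : ℕ) * treeWalkCount k n (d : ℕ) := by
    intro d
    rw [nat_card_sigma_const (c := treeWalkCount k n (d : ℕ))
      (h := fun (p : {p : List G.D // p.length = (d : ℕ) ∧ G.IsWalkFrom o o p ∧ G.NoBacktrack p}) => by
        have := fiber_card hk1 hreg n o p.1 (isWalkFrom_iff.mp p.2.2.1).1
          (noBacktrack_iff_chain'.mp p.2.2.2)
        rwa [p.2.1] at this)]
    rfl
  calc G.closedWalkCount o n
      = Nat.card {w : List G.D // w.length = n ∧ G.IsWalkFrom o o w} := rfl
    _ = ∑ d : Fin (n + 1), Nat.card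
          (Σ p : {p : List G.D // p.length = (d : ℕ) ∧ G.IsWalkFrom o o p ∧ G.NoBacktrack p},
            {w : List G.D // w.length = n ∧ G.IsWalk o w ∧ G.red w = p.1}) := by
        rw [← key, nat_card_sigma]
    _ = ∑ d : Fin (n + 1), G.nbClosedWalkCount o (d : ℕ) * treeWalkCount k n (d : ℕ) :=
        Finset.sum_congr rfl (fun d _ => step2 d)
    _ = ∑ d ∈ Finset.range (n + 1), G.nbClosedWalkCount o d * treeWalkCount k n d :=
        Fin.sum_univ_eq_sum_range (fun m => G.nbClosedWalkCount o m * treeWalkCount k n m) (n + 1)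

/-- For a connected `k`-regular multigraph `Γ` (`k ≥ 2`) with distinguished vertex `o`, the
number `Cₙ` of closed walks of length `n` at `o` equals `∑_{d=0}^{n} a*_d · c(n,d)`, where
`a*_d` is the number of non-backtracking closed walks of length `d` at `o`, and `c(n,d)` is the
number of walks of length `n` between two vertices at distance `d` in the `k`-regular tree. -/
theorem stmt15 (G : Multigraph) (o : G.V) (k : ℕ) (hk : 2 ≤ k)
    (hreg : G.IsRegular k) (hconn : G.Connected) (n : ℕ) :
    G.closedWalkCount o n =
      ∑ d ∈ Finset.range (n + 1), G.nbClosedWalkCount o d * treeWalkCount k n d := by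
  exact stmt15' G o k hk hreg hconn n
end
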